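/- For all integers p, q, r ≥ 2, the determinant of the Cartan matrix K of the star-shaped Dynkin diagram T_{p,q,r} equals p·q + q·r + r·p − p·q·r, i.e. det K = p·q·r·(1/p + 1/q + 1/r − 1). -/

import Mathlib

abbrev TVertex (p q r : ℕ) : Type := Unit ⊕ Fin (p - 1) ⊕ Fin (q - 1) ⊕ Fin (r - 1)

def TAdj {p q r : ℕ} : TVertex p q r → TVertex p q r → Bool
  | Sum.inl _, Sum.inr (Sum.inl k) => k.val == 0
  | Sum.inl _, Sum.inr (Sum.inr (Sum.inl k)) => k.val == 0
  | Sum.inl _, Sum.inr (Sum.inr (Sum.inr k)) => k.val == 0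
  | Sum.inr (Sum.inl k), Sum.inl _ => k.val == 0
  | Sum.inr (Sum.inr (Sum.inl k)), Sum.inl _ => k.val == 0
  | Sum.inr (Sum.inr (Sum.inr k)), Sum.inl _ => k.val == 0
  | Sum.inr (Sum.inl k), Sum.inr (Sum.inl l) => (k.val + 1 == l.val) || (l.val + 1 == k.val)
  | Sum.inr (Sum.inr (Sum.inl k)), Sum.inr (Sum.inr (Sum.inl l)) =>
      (k.val + 1 == l.val) || (l.val + 1 == k.val)
  | Sum.inr (Sum.inr (Sum.inr k)), Sum.inr (Sum.inr (Sum.inr l)) =>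
      (k.val + 1 == l.val) || (l.val + 1 == k.val)
  | _, _ => false

def TCartan (p q r : ℕ) : Matrix (TVertex p q r) (TVertex p q r) ℤ :=
  fun v w => if v = w then 2 else if TAdj v w then -1 else 0

namespace TCartanAux

open Finset

/-- pivot value along a chain of length `n+1`, at position `k` (chain indexed from the center). -/
def ch (n k : ℕ) : ℚ := ((n : ℚ) + 2 - k) / ((n : ℚ) + 1 - k)

lemma ch_pos (n k : ℕ) (h : k ≤ n) : 0 < ch n k := by
  have : (k : ℚ) ≤ n := by exact_mod_cast h
  unfold ch
  apply div_pos <;> linarith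

lemma ch_ne (n k : ℕ) (h : k ≤ n) : ch n k ≠ 0 := ne_of_gt (ch_pos n k h)

lemma ch_last (n : ℕ) : ch n n = 2 := by
  unfold ch; rw [show (n:ℚ) + 2 - n = 2 by ring, show (n:ℚ) + 1 - n = 1 by ring]; norm_num

lemma ch_step (n k : ℕ) (h : k < n) : ch n k + (ch n (k+1))⁻¹ = 2 := by
  have hk : (k : ℚ) ≤ (n : ℚ) - 1 := by
    have : (k:ℚ) + 1 ≤ n := by exact_mod_cast h
    linarith
  have h1 : (n : ℚ) + 1 - k ≠ 0 := by push_cast; intro hh; nlinarith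
  unfold ch
  rw [inv_div]
  push_cast
  rw [show (n:ℚ) + 2 - (k+1) = (n:ℚ) + 1 - k by ring, show (n:ℚ) + 1 - (k+1) = (n:ℚ) - k by ring]
  field_simp
  ring

lemma ch_zero_inv (n : ℕ) : (ch n 0)⁻¹ = ((n:ℚ)+1)/((n:ℚ)+2) := by
  unfold ch; rw [inv_div]; norm_num

lemma ch_succ (n k : ℕ) : ch (n+1) (k+1) = ch n k := by
  unfold ch; push_cast
  rw [show (n:ℚ) + 1 + 2 - (k+1) = (n:ℚ) + 2 - k by ring,
      show (n:ℚ) + 1 + 1 - (k+1) = (n:ℚ) + 1 - k by ring]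

lemma ch_prod (n : ℕ) : ∏ k : Fin (n+1), ch n k.val = (n:ℚ) + 2 := by
  induction n with
  | zero => simp [ch_last]
  | succ n ih =>
    rw [Fin.prod_univ_succ]
    simp only [Fin.val_succ, Fin.val_zero, ch_succ]
    rw [ih]
    have h2 : ((n:ℚ) + 2) ≠ 0 := by positivity
    unfold ch
    push_cast
    rw [show (n:ℚ) + 1 + 2 - 0 = (n:ℚ) + 3 by ring, show (n:ℚ) + 1 + 1 - 0 = (n:ℚ) + 2 by ring]
    field_simp
    ring

end TCartanAux

namespace TCartanAux

open Finset

variable (a b c : ℕ)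

abbrev V (a b c : ℕ) : Type := Unit ⊕ Fin (a+1) ⊕ Fin (b+1) ⊕ Fin (c+1)

def dcen : ℚ := 2 - ((a:ℚ)+1)/((a:ℚ)+2) - ((b:ℚ)+1)/((b:ℚ)+2) - ((c:ℚ)+1)/((c:ℚ)+2)

/-- the diagonal pivot of Gaussian elimination. -/
def dv : V a b c → ℚ
  | Sum.inl _ => dcen a b c
  | Sum.inr (Sum.inl k) => ch a k.val
  | Sum.inr (Sum.inr (Sum.inl k)) => ch b k.val
  | Sum.inr (Sum.inr (Sum.inr k)) => ch c k.val

/-- upper triangular factor -/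
def Uq : Matrix (V a b c) (V a b c) ℚ := fun v w =>
  match v, w with
  | Sum.inl _, Sum.inl _ => dcen a b c
  | Sum.inr (Sum.inl k), Sum.inl _ => if k.val = 0 then -1 else 0
  | Sum.inr (Sum.inr (Sum.inl k)), Sum.inl _ => if k.val = 0 then -1 else 0
  | Sum.inr (Sum.inr (Sum.inr k)), Sum.inl _ => if k.val = 0 then -1 else 0
  | Sum.inr (Sum.inl k), Sum.inr (Sum.inl l) =>
      if k.val = l.val then ch a k.val else if l.val + 1 = k.val then -1 else 0
  | Sum.inr (Sum.inr (Sum.inl k)), Sum.inr (Sum.inr (Sum.inl l)) =>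
      if k.val = l.val then ch b k.val else if l.val + 1 = k.val then -1 else 0
  | Sum.inr (Sum.inr (Sum.inr k)), Sum.inr (Sum.inr (Sum.inr l)) =>
      if k.val = l.val then ch c k.val else if l.val + 1 = k.val then -1 else 0
  | _, _ => 0

/-- lower triangular factor (unit diagonal) -/
def Lq : Matrix (V a b c) (V a b c) ℚ := fun v w =>
  match v, w with
  | Sum.inl _, Sum.inl _ => 1
  | Sum.inl _, Sum.inr (Sum.inl l) => if l.val = 0 then -(ch a l.val)⁻¹ else 0
  | Sum.inl _, Sum.inr (Sum.inr (Sum.inl l)) => if l.val = 0 then -(ch b l.val)⁻¹ else 0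
  | Sum.inl _, Sum.inr (Sum.inr (Sum.inr l)) => if l.val = 0 then -(ch c l.val)⁻¹ else 0
  | Sum.inr (Sum.inl k), Sum.inr (Sum.inl l) =>
      if k.val = l.val then 1 else if k.val + 1 = l.val then -(ch a l.val)⁻¹ else 0
  | Sum.inr (Sum.inr (Sum.inl k)), Sum.inr (Sum.inr (Sum.inl l)) =>
      if k.val = l.val then 1 else if k.val + 1 = l.val then -(ch b l.val)⁻¹ else 0
  | Sum.inr (Sum.inr (Sum.inr k)), Sum.inr (Sum.inr (Sum.inr l)) =>
      if k.val = l.val then 1 else if k.val + 1 = l.val then -(ch c l.val)⁻¹ else 0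
  | _, _ => 0

lemma sum_one {n : ℕ} (f : Fin n → ℚ) (j : ℕ) (hj : j < n) (x : ℚ)
    (h : ∀ l, f l = if l.val = j then x else 0) : ∑ l, f l = x := by
  have : ∀ l : Fin n, f l = if l = ⟨j, hj⟩ then x else 0 := by
    intro l; rw [h l]; apply if_congr _ rfl rfl; simp [Fin.ext_iff]
  simp [this]

lemma sum_two {n : ℕ} (f : Fin n → ℚ) (i j : ℕ) (hi : i < n) (hj : j < n) (hij : i ≠ j)
    (x y : ℚ)
    (h : ∀ l, f l = (if l.val = i then x else 0) + (if l.val = j then y else 0)) :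
    ∑ l, f l = x + y := by
  rw [Finset.sum_congr rfl (fun l _ => h l), Finset.sum_add_distrib,
    sum_one _ i hi x (fun l => rfl), sum_one _ j hj y (fun l => rfl)]

end TCartanAux

namespace TCartanAux
open Finset

lemma sumCC (n : ℕ) :
    (∑ x : Fin (n + 1), (if (x:ℕ) = 0 then -(ch n ↑x)⁻¹ else 0) * (if (x:ℕ) = 0 then (-1:ℚ) else 0))
      = (ch n 0)⁻¹ := by
  refine (sum_one _ 0 n.succ_pos (ch n 0)⁻¹ ?_).trans rfl
  intro l
  split_ifs <;>
    first
      | (exfalso; omega)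
      | (rw [show (l:ℕ) = 0 from by omega]; ring)
      | ring

lemma sumCM (n : ℕ) (m : Fin (n+1)) :
    (∑ x : Fin (n + 1), (if (x:ℕ) = 0 then -(ch n ↑x)⁻¹ else 0) *
        (if (x:ℕ) = (m:ℕ) then ch n ↑x else if (m:ℕ) + 1 = (x:ℕ) then (-1:ℚ) else 0))
      = if (m : ℕ) = 0 then -1 else 0 := by
  have hch : ch n 0 ≠ 0 := ch_ne n 0 n.zero_le
  by_cases hm : (m : ℕ) = 0
  · rw [if_pos hm]
    refine (sum_one _ 0 n.succ_pos (-1) ?_).trans rfl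
    intro l
    split_ifs <;>
      first
        | (exfalso; omega)
        | (rw [show (l:ℕ) = 0 from by omega]; field_simp)
        | ring
  · rw [if_neg hm]
    refine Finset.sum_eq_zero fun l _ => ?_
    split_ifs <;>
      first
        | (exfalso; omega)
        | ring

lemma sumMC (n : ℕ) (k : Fin (n+1)) :
    (∑ x : Fin (n + 1), (if (k:ℕ) = (x:ℕ) then 1 else if (k:ℕ) + 1 = (x:ℕ) then -(ch n ↑x)⁻¹ else 0) *
        (if (x:ℕ) = 0 then (-1:ℚ) else 0))
      = if (k : ℕ) = 0 then -1 else 0 := by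
  by_cases hk : (k : ℕ) = 0
  · rw [if_pos hk]
    refine (sum_one _ 0 n.succ_pos (-1) ?_).trans rfl
    intro l
    split_ifs <;>
      first
        | (exfalso; omega)
        | ring
  · rw [if_neg hk]
    refine Finset.sum_eq_zero fun l _ => ?_
    split_ifs <;>
      first
        | (exfalso; omega)
        | ring

lemma sumMM (n : ℕ) (k m : Fin (n+1)) :
    (∑ x : Fin (n + 1), (if (k:ℕ) = (x:ℕ) then 1 else if (k:ℕ) + 1 = (x:ℕ) then -(ch n ↑x)⁻¹ else 0) *
        (if (x:ℕ) = (m:ℕ) then ch n ↑x else if (m:ℕ) + 1 = (x:ℕ) then (-1:ℚ) else 0))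
      = if (k:ℕ) = ↑m then 2 else if ((k:ℕ) + 1 = ↑m ∨ (m:ℕ) + 1 = ↑k) then -1 else 0 := by
  have hkn : (k:ℕ) ≤ n := Nat.lt_succ_iff.mp k.isLt
  have hmn : (m:ℕ) ≤ n := Nat.lt_succ_iff.mp m.isLt
  rcases eq_or_ne (k:ℕ) (m:ℕ) with hkm | hkm
  · rw [if_pos hkm]
    rcases Nat.lt_or_ge (k:ℕ) n with hk | hk
    · refine (sum_two _ (k:ℕ) ((k:ℕ)+1) k.isLt (by omega) (by omega)
        (ch n ↑k) ((ch n (↑k+1))⁻¹) ?_).trans (ch_step n ↑k hk)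
      intro l
      have hl := l.isLt
      split_ifs <;>
        first
          | (exfalso; omega)
          | (rw [show (l:ℕ) = ↑k from by omega]; ring)
          | (rw [show (l:ℕ) = ↑k + 1 from by omega]; ring)
          | ring
    · have hk' : (k:ℕ) = n := le_antisymm hkn hk
      refine (sum_one _ (k:ℕ) k.isLt (ch n ↑k) ?_).trans (by rw [hk']; exact ch_last n)
      intro l
      have hl := l.isLt
      split_ifs <;>
        first
          | (exfalso; omega)
          | (rw [show (l:ℕ) = ↑k from by omega]; ring)
          | ring
  · rw [if_neg hkm]
    by_cases hadj1 : (k:ℕ) + 1 = (m:ℕ)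
    · rw [if_pos (Or.inl hadj1)]
      refine (sum_one _ (m:ℕ) m.isLt (-1) ?_).trans rfl
      intro l
      have hl := l.isLt
      split_ifs <;>
        first
          | (exfalso; omega)
          | (rw [show (l:ℕ) = ↑m from by omega]; field_simp [ch_ne n ↑m hmn])
          | ring
    · by_cases hadj2 : (m:ℕ) + 1 = (k:ℕ)
      · rw [if_pos (Or.inr hadj2)]
        refine (sum_one _ (k:ℕ) k.isLt (-1) ?_).trans rfl
        intro l
        have hl := l.isLt
        split_ifs <;>
          first
            | (exfalso; omega)
            | ring
      · rw [if_neg (by tauto)]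
        refine Finset.sum_eq_zero fun l _ => ?_
        have hl := l.isLt
        split_ifs <;>
          first
            | (exfalso; omega)
            | ring

end TCartanAux

namespace TCartanAux
open Finset

lemma mulLU (a b c : ℕ) :
    Lq a b c * Uq a b c = (TCartan (a+2) (b+2) (c+2)).map (Int.cast : ℤ → ℚ) := by
  ext v w
  rcases v with _ | k | k | k <;> rcases w with _ | m | m | m <;>
    simp only [Matrix.mul_apply, Fintype.sum_sum_type, Fintype.sum_unique, Matrix.map_apply,
      TCartan, TAdj, Lq, Uq, mul_zero, zero_mul, mul_one, one_mul, Finset.sum_const_zero,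
      add_zero, zero_add]
  · -- center, center
    rw [sumCC, sumCC, sumCC, ch_zero_inv, ch_zero_inv, ch_zero_inv]
    norm_num [dcen]
    ring
  · rw [sumCM]
    simp only [Sum.inl.injEq, reduceCtorEq, beq_iff_eq, if_false]
    split_ifs <;> norm_num
  · rw [sumCM]
    simp only [Sum.inl.injEq, reduceCtorEq, beq_iff_eq, if_false]
    split_ifs <;> norm_num
  · rw [sumCM]
    simp only [Sum.inl.injEq, reduceCtorEq, beq_iff_eq, if_false]
    split_ifs <;> norm_num
  · rw [sumMC]
    simp only [Sum.inl.injEq, reduceCtorEq, beq_iff_eq, if_false]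
    split_ifs <;> norm_num
  · -- chain1 chain1
    rw [sumMM]
    simp only [Sum.inr.injEq, Sum.inl.injEq, Fin.ext_iff, Bool.or_eq_true, beq_iff_eq]
    split_ifs <;> norm_num
  · simp
  · simp
  · rw [sumMC]
    simp only [Sum.inl.injEq, reduceCtorEq, beq_iff_eq, if_false]
    split_ifs <;> norm_num
  · simp
  · rw [sumMM]
    simp only [Sum.inr.injEq, Sum.inl.injEq, Fin.ext_iff, Bool.or_eq_true, beq_iff_eq]
    split_ifs <;> norm_num
  · simp
  · rw [sumMC]
    simp only [Sum.inl.injEq, reduceCtorEq, beq_iff_eq, if_false]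
    split_ifs <;> norm_num
  · simp
  · simp
  · rw [sumMM]
    simp only [Sum.inr.injEq, Sum.inl.injEq, Fin.ext_iff, Bool.or_eq_true, beq_iff_eq]
    split_ifs <;> norm_num

end TCartanAux

namespace TCartanAux
open Finset

variable (a b c : ℕ)

def σf : V a b c → ℤ
  | Sum.inl _ => 3
  | Sum.inr (Sum.inl k) => -3 * (k:ℤ)
  | Sum.inr (Sum.inr (Sum.inl k)) => -3 * (k:ℤ) + 1
  | Sum.inr (Sum.inr (Sum.inr k)) => -3 * (k:ℤ) + 2

lemma σf_inj : Function.Injective (σf a b c) := by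
  intro v w h
  rcases v with _ | k | k | k <;> rcases w with _ | l | l | l <;>
    simp only [σf] at h <;>
    first
      | rfl
      | (exfalso; omega)
      | (congr 1; first | (exact Fin.ext (by omega)) | (congr 1; first | (exact Fin.ext (by omega)) | (congr 1; exact Fin.ext (by omega))))

lemma det_Uq : (Uq a b c).det = dcen a b c * (((a:ℚ)+2) * (((b:ℚ)+2) * ((c:ℚ)+2))) := by
  letI : LinearOrder (V a b c) := LinearOrder.lift' (σf a b c) (σf_inj a b c)
  refine (Matrix.det_of_upperTriangular ?_).trans ?_
  · intro i j hij
    have h : σf a b c j < σf a b c i := hij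
    rcases i with _ | k | k | k <;> rcases j with _ | l | l | l <;>
      simp only [σf] at h <;>
      simp only [Uq] <;>
      first
        | (exfalso; omega)
        | rfl
        | (split_ifs <;> first | rfl | (exfalso; omega))
  · rw [Fintype.prod_sum_type]
    simp only [Fintype.prod_sum_type, Fintype.prod_unique, Uq, if_pos rfl, if_true]
    rw [ch_prod, ch_prod, ch_prod]

lemma det_Lq : (Lq a b c).det = 1 := by
  letI : LinearOrder (V a b c) := LinearOrder.lift' (σf a b c) (σf_inj a b c)
  refine (Matrix.det_of_lowerTriangular _ ?_).trans ?_
  · intro i j hij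
    have h : σf a b c i < σf a b c j := hij
    rcases i with _ | k | k | k <;> rcases j with _ | l | l | l <;>
      simp only [σf] at h <;>
      simp only [Lq] <;>
      first
        | (exfalso; omega)
        | rfl
        | (split_ifs <;> first | rfl | (exfalso; omega))
  · simp only [Fintype.prod_sum_type, Fintype.prod_unique, Lq, if_pos rfl, if_true]
    simp

end TCartanAux

theorem TCartan_det (p q r : ℕ) (hp : 2 ≤ p) (hq : 2 ≤ q) (hr : 2 ≤ r) :
    (TCartan p q r).det =
      (p : ℤ) * q + (q : ℤ) * r + (r : ℤ) * p - (p : ℤ) * q * r := by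
  obtain ⟨a, rfl⟩ : ∃ a, p = a + 2 := ⟨p - 2, by omega⟩
  obtain ⟨b, rfl⟩ : ∃ b, q = b + 2 := ⟨q - 2, by omega⟩
  obtain ⟨c, rfl⟩ : ∃ c, r = c + 2 := ⟨r - 2, by omega⟩
  have h1 : ((TCartan (a+2) (b+2) (c+2)).det : ℚ)
      = TCartanAux.dcen a b c * (((a:ℚ)+2) * (((b:ℚ)+2) * ((c:ℚ)+2))) :=
    calc ((TCartan (a+2) (b+2) (c+2)).det : ℚ)
        = ((TCartan (a+2) (b+2) (c+2)).map (Int.cast : ℤ → ℚ)).det :=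
          RingHom.map_det (Int.castRingHom ℚ) _
      _ = (TCartanAux.Lq a b c * TCartanAux.Uq a b c).det :=
          (congrArg Matrix.det (TCartanAux.mulLU a b c)).symm
      _ = _ := by
          rw [Matrix.det_mul, TCartanAux.det_Lq, TCartanAux.det_Uq, one_mul]
  apply Int.cast_injective (α := ℚ)
  rw [h1]
  push_cast
  rw [TCartanAux.dcen]
  have ha : ((a:ℚ)+2) ≠ 0 := by positivity
  have hb : ((b:ℚ)+2) ≠ 0 := by positivity
  have hc : ((c:ℚ)+2) ≠ 0 := by positivity
  field_simp
  ring
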